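/- Let α ∈ ℕ (a positive integer) and m, n ∈ ℕ₀ with m, n ≥ α. Then ∫_0^∞ L_m^{-α}(z) L_n^{-α}(z) z^{-α} e^{-z} dz = ((n-α)!/n!) δ_{m,n}; in particular the integrand is integrable despite the factor z^{-α}. -/

import Mathlib

open Finset Filter Topology MeasureTheory

/-- The generalized Laguerre polynomial
`L_n^α(z) = (-1)^n ∑_{k=0}^n (-α-n)_{n-k} z^k / (k! (n-k)!)`. -/
noncomputable def laguerre (n : ℕ) (α : ℂ) (z : ℂ) : ℂ :=
  (-1) ^ n * ∑ k ∈ Finset.range (n + 1),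
    (ascPochhammer ℂ (n - k)).eval (-α - (n : ℂ)) * z ^ k
      / ((k.factorial : ℂ) * ((n - k).factorial : ℂ))

namespace LagAux

/-- alternating sum of binomials identity -/
lemma sum_choose_eq (N : ℕ) : ∀ (x k : ℕ),
    ∑ j ∈ Finset.range (N + 1), (-1 : ℤ) ^ j * N.choose j * (x + j).choose k
      = if N ≤ k then (-1 : ℤ) ^ N * x.choose (k - N) else 0 := by
  induction N with
  | zero => intro x k; simp
  | succ N ih =>
    intro x k
    have key : ∑ j ∈ Finset.range (N + 1 + 1),
          (-1 : ℤ) ^ j * (N + 1).choose j * (x + j).choose k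
        = (∑ j ∈ Finset.range (N + 1), (-1 : ℤ) ^ j * N.choose j * (x + j).choose k)
          - ∑ j ∈ Finset.range (N + 1), (-1 : ℤ) ^ j * N.choose j * ((x + 1) + j).choose k := by
      rw [Finset.sum_range_succ'
        (fun j => (-1 : ℤ) ^ j * (N + 1).choose j * (x + j).choose k)]
      have e1 : ∀ j, (-1 : ℤ) ^ (j + 1) * (N + 1).choose (j + 1) * (x + (j + 1)).choose k
          = -((-1 : ℤ) ^ j * N.choose j * ((x + 1) + j).choose k)
            + (-1 : ℤ) ^ (j + 1) * N.choose (j + 1) * (x + (j + 1)).choose k := by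
        intro j
        have h2 : x + (j + 1) = (x + 1) + j := by omega
        rw [Nat.choose_succ_succ, h2]
        push_cast
        ring
      rw [Finset.sum_congr rfl (fun j _ => e1 j), Finset.sum_add_distrib]
      have e2 : ∑ j ∈ Finset.range (N + 1),
            (-1 : ℤ) ^ (j + 1) * N.choose (j + 1) * (x + (j + 1)).choose k
          = ∑ j ∈ Finset.range (N + 1), (-1 : ℤ) ^ j * N.choose j * (x + j).choose k
            - (-1 : ℤ) ^ 0 * N.choose 0 * (x + 0).choose k := by
      -- sum over j+1 terms = full (N+2)-sum minus j=0 term; and top term (j = N+1) is 0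
        have e3 : ∑ j ∈ Finset.range (N + 1 + 1),
              (-1 : ℤ) ^ j * N.choose j * (x + j).choose k
            = ∑ j ∈ Finset.range (N + 1),
                (-1 : ℤ) ^ (j + 1) * N.choose (j + 1) * (x + (j + 1)).choose k
              + (-1 : ℤ) ^ 0 * N.choose 0 * (x + 0).choose k :=
          Finset.sum_range_succ' (fun j => (-1 : ℤ) ^ j * N.choose j * (x + j).choose k) (N + 1)
        rw [Finset.sum_range_succ (fun j => (-1 : ℤ) ^ j * N.choose j * (x + j).choose k)] at e3
        rw [Nat.choose_succ_self] at e3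
        push_cast at e3 ⊢
        linarith [e3]
      rw [e2]
      simp only [Finset.sum_neg_distrib, Nat.choose_zero_right, Nat.cast_one]
      push_cast
      ring
    rw [key, ih x k, ih (x + 1) k]
    by_cases hk : N + 1 ≤ k
    · have hk' : N ≤ k := by omega
      rw [if_pos hk', if_pos hk', if_pos hk]
      have h4 : k - N = (k - (N + 1)) + 1 := by omega
      have h5 : (x + 1).choose (k - N) = x.choose (k - (N + 1)) + x.choose (k - N) := by
        rw [h4, Nat.choose_succ_succ]
      rw [h5]
      push_cast
      ring
    · rw [if_neg hk]
      by_cases hk2 : N ≤ k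
      · have : k = N := by omega
        subst this
        rw [if_pos le_rfl, if_pos le_rfl, Nat.sub_self]
        simp
      · rw [if_neg hk2, if_neg hk2]
        simp

/-- coefficients of the shifted polynomial -/
noncomputable def d (n α j : ℕ) : ℂ :=
  (-1 : ℂ) ^ (α + j) * ((n - α).choose j : ℂ) / ((α + j).factorial : ℂ)

lemma asc_eval_neg (M j : ℕ) :
    (ascPochhammer ℂ M).eval (-(j : ℂ)) = (-1 : ℂ) ^ M * (j.descFactorial M : ℂ) := by
  rw [ascPochhammer_eval_neg_eq_descPochhammer, descPochhammer_eval_eq_descFactorial]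

lemma laguerre_factor (α n : ℕ) (hn : α ≤ n) (z : ℂ) :
    laguerre n (-(α : ℂ)) z
      = z ^ α * ∑ j ∈ Finset.range (n - α + 1), d n α j * z ^ j := by
  have hval : -(-(α : ℂ)) - (n : ℂ) = -((n - α : ℕ) : ℂ) := by
    push_cast [Nat.cast_sub hn]; ring
  rw [laguerre, hval]
  rw [Finset.range_eq_Ico, ← Finset.sum_Ico_consecutive _ (Nat.zero_le α) (by omega : α ≤ n + 1)]
  have hzero : ∑ k ∈ Finset.Ico 0 α,
      (ascPochhammer ℂ (n - k)).eval (-((n - α : ℕ) : ℂ)) * z ^ k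
        / ((k.factorial : ℂ) * ((n - k).factorial : ℂ)) = 0 := by
    apply Finset.sum_eq_zero
    intro k hk
    simp only [Finset.mem_Ico] at hk
    rw [ascPochhammer_eval_neg_coe_nat_of_lt (by omega)]
    simp
  rw [hzero, zero_add]
  rw [Finset.sum_Ico_eq_sum_range]
  have hlen : n + 1 - α = n - α + 1 := by omega
  rw [hlen, Finset.mul_sum, Finset.mul_sum]
  apply Finset.sum_congr rfl
  intro j hj
  simp only [Finset.mem_range] at hj
  have hj' : j ≤ n - α := by omega
  rw [asc_eval_neg]
  have hM : n - (α + j) = (n - α) - j := by omega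
  rw [hM]
  have hdesc : ((n - α).descFactorial ((n - α) - j) : ℂ)
      = (((n - α) - j).factorial : ℂ) * ((n - α).choose j : ℂ) := by
    rw [Nat.descFactorial_eq_factorial_mul_choose, Nat.choose_symm hj']
    push_cast
    ring
  rw [hdesc, d]
  have hfac : (((n - α) - j).factorial : ℂ) ≠ 0 := Nat.cast_ne_zero.mpr (Nat.factorial_ne_zero _)
  have hfac2 : (((α + j)).factorial : ℂ) ≠ 0 := Nat.cast_ne_zero.mpr (Nat.factorial_ne_zero _)
  have hsign : ((-1 : ℂ)) ^ n * (-1 : ℂ) ^ ((n - α) - j) = (-1 : ℂ) ^ (α + j) := by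
    have h2 : n + ((n - α) - j) = α + j + 2 * ((n - α) - j) := by omega
    rw [← pow_add, h2, pow_add, pow_mul]
    norm_num
  field_simp
  rw [pow_add z α j]
  rw [← hsign]
  ring

/-- integral of monomial times exponential -/
lemma mono_intgr (p : ℕ) :
    IntegrableOn (fun z : ℝ => (z : ℂ) ^ p * Complex.exp (-(z : ℂ))) (Set.Ioi (0 : ℝ)) ∧
    ∫ z in Set.Ioi (0 : ℝ), (z : ℂ) ^ p * Complex.exp (-(z : ℂ)) = (p.factorial : ℂ) := by
  have hreal : IntegrableOn (fun x : ℝ => Real.exp (-x) * x ^ ((p : ℝ) + 1 - 1)) (Set.Ioi 0) :=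
    Real.GammaIntegral_convergent (by positivity)
  have heq : ∀ x ∈ Set.Ioi (0 : ℝ), Real.exp (-x) * x ^ ((p : ℝ) + 1 - 1) = x ^ p * Real.exp (-x) := by
    intro x _
    rw [add_sub_cancel_right, Real.rpow_natCast]
    ring
  have hreal2 : IntegrableOn (fun x : ℝ => x ^ p * Real.exp (-x)) (Set.Ioi 0) :=
    hreal.congr_fun heq measurableSet_Ioi
  have hrealint : ∫ x in Set.Ioi (0 : ℝ), x ^ p * Real.exp (-x) = (p.factorial : ℝ) := by
    rw [← setIntegral_congr_fun measurableSet_Ioi heq]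
    rw [← Real.Gamma_eq_integral (by positivity : (0 : ℝ) < (p : ℝ) + 1)]
    exact_mod_cast Real.Gamma_nat_eq_factorial p
  have hfun : ∀ x : ℝ, ((x ^ p * Real.exp (-x) : ℝ) : ℂ) = (x : ℂ) ^ p * Complex.exp (-(x : ℂ)) := by
    intro x
    push_cast [Complex.ofReal_exp]
    ring
  constructor
  · have h1 : IntegrableOn (fun x : ℝ => ((x ^ p * Real.exp (-x) : ℝ) : ℂ)) (Set.Ioi 0) :=
      hreal2.ofReal
    exact h1.congr_fun (fun x _ => hfun x) measurableSet_Ioi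
  · rw [← setIntegral_congr_fun measurableSet_Ioi (fun x _ => hfun x)]
    rw [show (∫ x in Set.Ioi (0 : ℝ), ((x ^ p * Real.exp (-x) : ℝ) : ℂ))
        = ((∫ x in Set.Ioi (0 : ℝ), x ^ p * Real.exp (-x) : ℝ) : ℂ) from
      integral_ofReal (𝕜 := ℂ), hrealint]
    norm_cast

/-- the inner sum -/
lemma inner_sum (α n : ℕ) (hn : α ≤ n) (i : ℕ) (hi : i ≤ n - α) :
    ∑ j ∈ Finset.range (n - α + 1), d n α j * ((α + i + j).factorial : ℂ)
      = if i = n - α then (-1 : ℂ) ^ n * ((n - α).factorial : ℂ) else 0 := by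
  set N := n - α with hN
  have hterm : ∀ j, d n α j * ((α + i + j).factorial : ℂ)
      = (-1 : ℂ) ^ α * (i.factorial : ℂ)
        * (((-1 : ℤ) ^ j * N.choose j * ((α + i) + j).choose i : ℤ) : ℂ) := by
    intro j
    have hfact : (α + i + j).factorial = (α + i + j).choose i * i.factorial * (α + j).factorial := by
      have h := Nat.choose_mul_factorial_mul_factorial (show i ≤ α + i + j by omega)
      have h2 : α + i + j - i = α + j := by omega
      rw [h2] at h
      omega
    rw [d, hfact]
    have hfac2 : (((α + j)).factorial : ℂ) ≠ 0 := Nat.cast_ne_zero.mpr (Nat.factorial_ne_zero _)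
    have harg : (α + i) + j = α + i + j := by omega
    rw [harg]
    push_cast
    rw [pow_add]
    field_simp
    ring
  rw [Finset.sum_congr rfl (fun j _ => hterm j), ← Finset.mul_sum]
  have hcast : ∑ j ∈ Finset.range (N + 1),
      (((-1 : ℤ) ^ j * N.choose j * ((α + i) + j).choose i : ℤ) : ℂ)
        = (((∑ j ∈ Finset.range (N + 1),
            (-1 : ℤ) ^ j * N.choose j * ((α + i) + j).choose i) : ℤ) : ℂ) := by
    push_cast
    rfl
  rw [hcast, sum_choose_eq N (α + i) i]
  by_cases hiN : i = N
  · subst hiN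
    rw [if_pos le_rfl, if_pos rfl, Nat.sub_self, Nat.choose_zero_right]
    push_cast
    have hpow : ((-1 : ℂ)) ^ α * (-1 : ℂ) ^ N = (-1 : ℂ) ^ n := by
      rw [← pow_add]; congr 1; omega
    linear_combination (N.factorial : ℂ) * hpow
  · have : ¬ (N ≤ i) := by omega
    rw [if_neg this, if_neg hiN]
    simp

lemma main_le (α : ℕ) (m n : ℕ) (hm : α ≤ m) (hn : α ≤ n) (hmn : m ≤ n) :
    IntegrableOn
      (fun z : ℝ =>
        laguerre m (-(α : ℂ)) z * laguerre n (-(α : ℂ)) z * (z : ℂ) ^ (-(α : ℂ))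
          * Complex.exp (-z))
      (Set.Ioi (0 : ℝ)) ∧
    ∫ z in Set.Ioi (0 : ℝ),
        laguerre m (-(α : ℂ)) z * laguerre n (-(α : ℂ)) z * (z : ℂ) ^ (-(α : ℂ))
          * Complex.exp (-z)
      = (((n - α).factorial : ℂ) / (n.factorial : ℂ)) * (if m = n then 1 else 0) := by
  set M := m - α with hM
  set N := n - α with hN
  set g : ℝ → ℂ := fun z => ∑ i ∈ Finset.range (M + 1), ∑ j ∈ Finset.range (N + 1),
    (d m α i * d n α j) * ((z : ℂ) ^ (α + i + j) * Complex.exp (-(z : ℂ))) with hg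
  have heq : ∀ z ∈ Set.Ioi (0 : ℝ),
      laguerre m (-(α : ℂ)) z * laguerre n (-(α : ℂ)) z * (z : ℂ) ^ (-(α : ℂ))
        * Complex.exp (-z) = g z := by
    intro z hz
    have hz0 : (0 : ℝ) < z := hz
    have hzc : (z : ℂ) ≠ 0 := by exact_mod_cast hz0.ne'
    have hcpow : (z : ℂ) ^ (-(α : ℂ)) = ((z : ℂ) ^ α)⁻¹ := by
      rw [Complex.cpow_neg, Complex.cpow_natCast]
    rw [hcpow, laguerre_factor α m hm, laguerre_factor α n hn, hg]
    have hzpow : ((z : ℂ) ^ α) ≠ 0 := pow_ne_zero _ hzc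
    have : (z : ℂ) ^ α * (∑ j ∈ Finset.range (M + 1), d m α j * (z : ℂ) ^ j)
        * ((z : ℂ) ^ α * (∑ j ∈ Finset.range (N + 1), d n α j * (z : ℂ) ^ j))
        * ((z : ℂ) ^ α)⁻¹ * Complex.exp (-(z : ℂ))
      = (z : ℂ) ^ α * ((∑ i ∈ Finset.range (M + 1), d m α i * (z : ℂ) ^ i)
          * (∑ j ∈ Finset.range (N + 1), d n α j * (z : ℂ) ^ j)) * Complex.exp (-(z : ℂ)) := by
      field_simp
    rw [this, Finset.sum_mul_sum]
    simp only [Finset.sum_mul, Finset.mul_sum]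
    refine Finset.sum_congr rfl fun i _ => Finset.sum_congr rfl fun j _ => ?_
    rw [pow_add, pow_add]
    ring
  have hgint : IntegrableOn g (Set.Ioi (0 : ℝ)) := by
    apply MeasureTheory.integrable_finset_sum
    intro i _
    apply MeasureTheory.integrable_finset_sum
    intro j _
    exact ((mono_intgr (α + i + j)).1).const_mul _
  constructor
  · exact hgint.congr_fun (fun z hz => (heq z hz).symm) measurableSet_Ioi
  · rw [setIntegral_congr_fun measurableSet_Ioi heq, hg]
    rw [MeasureTheory.integral_finset_sum _ (fun i _ => by
      apply MeasureTheory.integrable_finset_sum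
      intro j _
      exact ((mono_intgr (α + i + j)).1).const_mul _)]
    have hval : ∀ i ∈ Finset.range (M + 1),
        ∫ z in Set.Ioi (0 : ℝ), ∑ j ∈ Finset.range (N + 1),
          (d m α i * d n α j) * ((z : ℂ) ^ (α + i + j) * Complex.exp (-(z : ℂ)))
        = d m α i * (if i = N then (-1 : ℂ) ^ n * (N.factorial : ℂ) else 0) := by
      intro i hi2
      rw [MeasureTheory.integral_finset_sum _ (fun j _ =>
        ((mono_intgr (α + i + j)).1).const_mul _)]
      have : ∀ j ∈ Finset.range (N + 1),
          ∫ z in Set.Ioi (0 : ℝ),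
            (d m α i * d n α j) * ((z : ℂ) ^ (α + i + j) * Complex.exp (-(z : ℂ)))
          = d m α i * (d n α j * ((α + i + j).factorial : ℂ)) := by
        intro j _
        rw [integral_const_mul, (mono_intgr (α + i + j)).2]
        ring
      rw [Finset.sum_congr rfl this, ← Finset.mul_sum]
      congr 1
      exact inner_sum α n hn i (by simp only [Finset.mem_range] at *; omega)
    rw [Finset.sum_congr rfl hval]
    by_cases hmn2 : m = n
    · subst hmn2
      have hMN : M = N := rfl
      rw [hMN]
      simp only [mul_ite, mul_zero]
      rw [Finset.sum_ite_eq' (Finset.range (N + 1)) N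
        (fun i => d m α i * ((-1 : ℂ) ^ m * (N.factorial : ℂ)))]
      rw [if_pos (Finset.self_mem_range_succ N)]
      simp only [if_true, mul_one]
      rw [d]
      have hmN : α + N = m := by omega
      rw [hmN, Nat.choose_self]
      have hfm : ((m.factorial : ℂ)) ≠ 0 := Nat.cast_ne_zero.mpr (Nat.factorial_ne_zero _)
      have hs2 : ((-1 : ℂ)) ^ (m * 2) = 1 := by
        rw [pow_mul']
        norm_num
      field_simp
      linear_combination (N.factorial : ℂ) * hs2
    · have hlt : M < N := by omega
      have : ∀ i ∈ Finset.range (M + 1),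
          d m α i * (if i = N then (-1 : ℂ) ^ n * (N.factorial : ℂ) else 0) = 0 := by
        intro i hi
        simp only [Finset.mem_range] at hi
        rw [if_neg (by omega)]
        ring
      rw [Finset.sum_congr rfl this, Finset.sum_const_zero, if_neg hmn2]
      ring

end LagAux

theorem laguerre_neg_param_orthogonality (α : ℕ) (hα : 0 < α) (m n : ℕ)
    (hm : α ≤ m) (hn : α ≤ n) :
    IntegrableOn
      (fun z : ℝ =>
        laguerre m (-(α : ℂ)) z * laguerre n (-(α : ℂ)) z * (z : ℂ) ^ (-(α : ℂ))
          * Complex.exp (-z))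
      (Set.Ioi (0 : ℝ)) ∧
    ∫ z in Set.Ioi (0 : ℝ),
        laguerre m (-(α : ℂ)) z * laguerre n (-(α : ℂ)) z * (z : ℂ) ^ (-(α : ℂ))
          * Complex.exp (-z)
      = (((n - α).factorial : ℂ) / (n.factorial : ℂ)) * (if m = n then 1 else 0) := by
  rcases le_or_gt m n with h | h
  · exact LagAux.main_le α m n hm hn h
  · have hsym := LagAux.main_le α n m hn hm h.le
    have hfun : (fun z : ℝ =>
        laguerre n (-(α : ℂ)) z * laguerre m (-(α : ℂ)) z * (z : ℂ) ^ (-(α : ℂ))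
          * Complex.exp (-z))
        = (fun z : ℝ =>
        laguerre m (-(α : ℂ)) z * laguerre n (-(α : ℂ)) z * (z : ℂ) ^ (-(α : ℂ))
          * Complex.exp (-z)) := by
      funext z; ring
    rw [hfun] at hsym
    refine ⟨hsym.1, ?_⟩
    rw [hsym.2, if_neg (by omega : ¬ n = m), if_neg (by omega : ¬ m = n)]
    ring
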